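/- Let C = {c₁, c₂, …} be countably infinite, V a countably infinite set, and p ∈ (0,1). If each 2-element subset of V is independently coloured c_i with probability (1−p)^{i−1} p, then with probability 1 the resulting C-coloured graph has the (∗∞)-property, and hence is isomorphic to the universal homogeneous C-coloured graph. -/

import Mathlib

open MeasureTheory

/-- The `(∗∞)`-property of a `C`-coloured graph `(V, χ)`. -/
def StarInfty {V C : Type*} (χ : V → V → C) : Prop :=
  ∀ (k : ℕ) (c : Fin k → C) (U : Fin k → Finset V),
    (∀ i j : Fin k, i ≠ j → Disjoint (U i) (U j)) →
    ∃ z : V, ∀ i : Fin k, ∀ u ∈ U i, z ≠ u ∧ χ z u = c i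

section BF
variable {V W : Type} (χ : V → V → ℕ) (ψ : W → W → ℕ)

def GoodList (l : List (V × W)) : Prop :=
  (l.map Prod.fst).Nodup ∧ (l.map Prod.snd).Nodup ∧
    ∀ p ∈ l, ∀ q ∈ l, p.1 ≠ q.1 → ψ p.2 q.2 = χ p.1 q.1

variable {χ ψ}

lemma GoodList.swap {l : List (V × W)} (h : GoodList χ ψ l) :
    GoodList ψ χ (l.map Prod.swap) := by
  obtain ⟨h1, h2, h3⟩ := h
  refine ⟨?_, ?_, ?_⟩
  · simpa [List.map_map, Function.comp_def] using h2
  · simpa [List.map_map, Function.comp_def] using h1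
  · intro p hp q hq hne
    simp only [List.mem_map] at hp hq
    obtain ⟨p', hp', rfl⟩ := hp
    obtain ⟨q', hq', rfl⟩ := hq
    simp only [Prod.fst_swap, Prod.snd_swap] at hne ⊢
    have hne1 : p'.1 ≠ q'.1 := fun hh =>
      hne (congrArg Prod.snd (List.inj_on_of_nodup_map h1 hp' hq' hh))
    exact (h3 p' hp' q' hq' hne1).symm

lemma GoodList.forth (hψ : StarInfty ψ) (hχsym : ∀ a b, χ a b = χ b a)
    (hψsym : ∀ a b, ψ a b = ψ b a) {l : List (V × W)} (hl : GoodList χ ψ l)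
    (x : V) (hx : x ∉ l.map Prod.fst) :
    ∃ y, GoodList χ ψ (l ++ [(x, y)]) := by
  obtain ⟨h1, h2, h3⟩ := hl
  have hlnd : l.Nodup := h1.of_map _
  have hdisj : ∀ i j : Fin l.length, i ≠ j →
      Disjoint ({(l.get i).2} : Finset W) {(l.get j).2} := by
    intro i j hij
    simp only [Finset.disjoint_singleton]
    intro hss
    have : l.get i = l.get j :=
      List.inj_on_of_nodup_map h2 (l.get_mem i) (l.get_mem j) hss
    exact hij (hlnd.get_inj_iff.1 this)
  obtain ⟨z, hz⟩ := hψ l.length (fun i => χ x (l.get i).1) (fun i => {(l.get i).2}) hdisj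
  · refine ⟨z, ?_, ?_, ?_⟩
    · rw [List.map_append]
      simp only [List.map_cons, List.map_nil]
      rw [List.nodup_append]
      exact ⟨h1, List.nodup_singleton x, fun a ha b hb hab => hx (by rw [List.mem_singleton] at hb; rw [← hb, ← hab]; exact ha)⟩
    · rw [List.map_append]
      simp only [List.map_cons, List.map_nil]
      rw [List.nodup_append]
      refine ⟨h2, List.nodup_singleton z, ?_⟩
      intro a ha
      simp only [List.mem_singleton]
      intro b hb rfl'; subst hb
      subst rfl'
      rw [List.mem_map] at ha
      obtain ⟨p, hp, hpa⟩ := ha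
      obtain ⟨i, rfl⟩ := List.mem_iff_get.1 hp
      exact (hz i (l.get i).2 (Finset.mem_singleton_self _)).1 hpa.symm
    · intro p hp q hq hne
      rw [List.mem_append, List.mem_singleton] at hp hq
      rcases hp with hp | rfl
      · rcases hq with hq | rfl
        · exact h3 p hp q hq hne
        · obtain ⟨i, rfl⟩ := List.mem_iff_get.1 hp
          have := (hz i (l.get i).2 (Finset.mem_singleton_self _)).2
          rw [hψsym, hχsym] at this
          exact this
      · rcases hq with hq | rfl
        · obtain ⟨i, rfl⟩ := List.mem_iff_get.1 hq
          exact (hz i (l.get i).2 (Finset.mem_singleton_self _)).2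
        · exact absurd rfl hne

lemma GoodList.back (hχ : StarInfty χ) (hχsym : ∀ a b, χ a b = χ b a)
    (hψsym : ∀ a b, ψ a b = ψ b a) {l : List (V × W)} (hl : GoodList χ ψ l)
    (y : W) (hy : y ∉ l.map Prod.snd) :
    ∃ x, GoodList χ ψ (l ++ [(x, y)]) := by
  obtain ⟨z, hz⟩ := hl.swap.forth hχ hψsym hχsym y
    (by simpa [List.map_map, Function.comp_def] using hy)
  refine ⟨z, ?_⟩
  have := hz.swap
  simpa [List.map_map, Function.comp_def] using this

lemma StarInfty.infinite {W : Type} {ψ : W → W → ℕ} (h : StarInfty ψ) : Infinite W := by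
  rw [← not_finite_iff_infinite]
  intro hfin
  haveI := Fintype.ofFinite W
  obtain ⟨z, hz⟩ := h 1 (fun _ => 0) (fun _ => Finset.univ) (by simp [Fin.ext_iff])
  exact (hz 0 z (Finset.mem_univ z)).1 rfl

lemma back_and_forth {V W : Type} [Countable V] [Infinite V] [Countable W]
    {χ : V → V → ℕ} {ψ : W → W → ℕ}
    (hχsym : ∀ a b, χ a b = χ b a) (hχ : StarInfty χ)
    (hψsym : ∀ a b, ψ a b = ψ b a) (hψ : StarInfty ψ) :
    ∃ g : V → W, Function.Bijective g ∧ ∀ u v : V, u ≠ v → ψ (g u) (g v) = χ u v := by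
  haveI : Infinite W := hψ.infinite
  obtain ⟨eV⟩ : Nonempty (ℕ ≃ V) :=
    (nonempty_denumerable V).map fun d => (@Denumerable.eqv V d).symm
  obtain ⟨eW⟩ : Nonempty (ℕ ≃ W) :=
    (nonempty_denumerable W).map fun d => (@Denumerable.eqv W d).symm
  classical
  -- the step function
  let F : ℕ → {l : List (V × W) // GoodList χ ψ l} → {l : List (V × W) // GoodList χ ψ l} :=
    fun n l =>
      if Even n then
        if hx : eV (n / 2) ∈ l.1.map Prod.fst then l
        else ⟨l.1 ++ [(eV (n / 2), (l.2.forth hψ hχsym hψsym (eV (n / 2)) hx).choose)],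
          (l.2.forth hψ hχsym hψsym (eV (n / 2)) hx).choose_spec⟩
      else
        if hy : eW (n / 2) ∈ l.1.map Prod.snd then l
        else ⟨l.1 ++ [((l.2.back hχ hχsym hψsym (eW (n / 2)) hy).choose, eW (n / 2))],
          (l.2.back hχ hχsym hψsym (eW (n / 2)) hy).choose_spec⟩
  let s : ℕ → {l : List (V × W) // GoodList χ ψ l} :=
    fun n => Nat.rec ⟨[], ⟨List.nodup_nil, List.nodup_nil, by simp⟩⟩ (fun n ih => F n ih) n
  have hstep : ∀ n, ∃ t, (s (n + 1)).1 = (s n).1 ++ t := by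
    intro n
    show ∃ t, (F n (s n)).1 = (s n).1 ++ t
    unfold F
    split
    · split
      · exact ⟨[], by simp⟩
      · exact ⟨_, rfl⟩
    · split
      · exact ⟨[], by simp⟩
      · exact ⟨_, rfl⟩
  have hmono : ∀ {m n : ℕ}, m ≤ n → ∀ p ∈ (s m).1, p ∈ (s n).1 := by
    intro m n hmn
    induction n, hmn using Nat.le_induction with
    | base => exact fun p hp => hp
    | succ n hmn ih =>
      intro p hp
      obtain ⟨t, ht⟩ := hstep n
      rw [ht, List.mem_append]
      exact Or.inl (ih p hp)
  have hhitV : ∀ m, eV m ∈ (s (2 * m + 1)).1.map Prod.fst := by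
    intro m
    show eV m ∈ (F (2 * m) (s (2 * m))).1.map Prod.fst
    unfold F
    rw [if_pos ⟨m, (two_mul m)⟩]
    have h2 : 2 * m / 2 = m := by omega
    rw [h2]
    split
    · assumption
    · simp
  have hhitW : ∀ m, eW m ∈ (s (2 * m + 2)).1.map Prod.snd := by
    intro m
    show eW m ∈ (F (2 * m + 1) (s (2 * m + 1))).1.map Prod.snd
    unfold F
    rw [if_neg (by simp [Nat.even_add_one, Nat.even_mul])]
    have h2 : (2 * m + 1) / 2 = m := by omega
    rw [h2]
    split
    · assumption
    · simp
  -- every x : V appears as a first coordinate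
  have hV : ∀ x : V, ∃ q : V × W, (∃ n, q ∈ (s n).1) ∧ q.1 = x := by
    intro x
    have := hhitV (eV.symm x)
    rw [List.mem_map] at this
    obtain ⟨q, hq, hq1⟩ := this
    exact ⟨q, ⟨2 * eV.symm x + 1, hq⟩, by rwa [Equiv.apply_symm_apply] at hq1⟩
  -- coherence
  have hcoh : ∀ p q : V × W, (∃ n, p ∈ (s n).1) → (∃ n, q ∈ (s n).1) → p.1 = q.1 → p = q := by
    rintro p q ⟨n, hn⟩ ⟨m, hm⟩ h1
    have hp' := hmono (le_max_left n m) p hn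
    have hq' := hmono (le_max_right n m) q hm
    exact List.inj_on_of_nodup_map (s (max n m)).2.1 hp' hq' h1
  have hcoh2 : ∀ p q : V × W, (∃ n, p ∈ (s n).1) → (∃ n, q ∈ (s n).1) → p.2 = q.2 → p = q := by
    rintro p q ⟨n, hn⟩ ⟨m, hm⟩ h1
    have hp' := hmono (le_max_left n m) p hn
    have hq' := hmono (le_max_right n m) q hm
    exact List.inj_on_of_nodup_map (s (max n m)).2.2.1 hp' hq' h1
  let g : V → W := fun x => (hV x).choose.2
  have hg : ∀ x : V, (∃ n, (x, g x) ∈ (s n).1) := by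
    intro x
    obtain ⟨hmem, h1⟩ := (hV x).choose_spec
    have : (hV x).choose = (x, g x) := by
      ext
      · exact h1
      · rfl
    rwa [this] at hmem
  refine ⟨g, ⟨?_, ?_⟩, ?_⟩
  · intro x y hxy
    have := hcoh2 (x, g x) (y, g y) (hg x) (hg y) hxy
    exact congrArg Prod.fst this
  · intro y
    have := hhitW (eW.symm y)
    rw [List.mem_map] at this
    obtain ⟨q, hq, hq2⟩ := this
    rw [Equiv.apply_symm_apply] at hq2
    refine ⟨q.1, ?_⟩
    have : (q.1, g q.1) = q := hcoh (q.1, g q.1) q (hg q.1) ⟨2 * eW.symm y + 2, hq⟩ rfl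
    rw [← hq2, ← this]
  · intro u v huv
    obtain ⟨n, hn⟩ := hg u
    obtain ⟨m, hm⟩ := hg v
    have hu' := hmono (le_max_left n m) _ hn
    have hv' := hmono (le_max_right n m) _ hm
    exact (s (max n m)).2.2.2 (u, g u) hu' (v, g v) hv' huv

lemma aux_star {V : Type} [Countable V] [Infinite V]
    {Ω : Type*} [MeasurableSpace Ω] (μ : Measure Ω) [IsProbabilityMeasure μ]
    (p : ℝ) (hp0 : 0 < p) (hp1 : p < 1)
    (X : Sym2 V → Ω → ℕ) (hmeas : ∀ e, Measurable (X e))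
    (hindep : ProbabilityTheory.iIndepFun X μ)
    (hdist : ∀ (e : Sym2 V) (i : ℕ),
      μ {ω | X e ω = i} = ENNReal.ofReal ((1 - p) ^ i * p))
    (k : ℕ) (c : Fin k → ℕ) (U : Fin k → Finset V)
    (hU : ∀ i j : Fin k, i ≠ j → Disjoint (U i) (U j)) :
    ∀ᵐ ω ∂μ, ∃ z : V, ∀ i : Fin k, ∀ u ∈ U i, z ≠ u ∧ X s(z, u) ω = c i := by
  classical
  set T : Finset V := Finset.univ.biUnion U with hT
  have hUT : ∀ i : Fin k, ∀ u ∈ U i, u ∈ T := fun i u hu =>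
    Finset.mem_biUnion.2 ⟨i, Finset.mem_univ i, hu⟩
  set col : V → ℕ := fun u => if h : ∃ i, u ∈ U i then c h.choose else 0 with hcoldef
  have hcol : ∀ i : Fin k, ∀ u ∈ U i, col u = c i := by
    intro i u hu
    have h : ∃ i, u ∈ U i := ⟨i, hu⟩
    have hch := h.choose_spec
    rw [hcoldef]
    dsimp only
    rw [dif_pos h]
    congr 1
    by_contra hne
    exact (Finset.disjoint_left.1 (hU _ _ hne) hch) hu
  set colE : Sym2 V → ℕ := Sym2.lift ⟨fun a b =>
      if a ∈ T ∧ b ∉ T then col a else if b ∈ T ∧ a ∉ T then col b else 0, by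
    intro a b
    dsimp only
    by_cases ha : a ∈ T <;> by_cases hb : b ∈ T <;> simp [ha, hb]⟩ with hcolEdef
  have hcolE : ∀ z u : V, z ∉ T → u ∈ T → colE s(z, u) = col u := by
    intro z u hz hu
    rw [hcolEdef, Sym2.lift_mk]
    simp [hz, hu]
  have hTc : (↑T : Set V)ᶜ.Infinite := T.finite_toSet.infinite_compl
  set z : ℕ ↪ ((↑T : Set V)ᶜ : Set V) := hTc.natEmbedding with hzdef
  have hzT : ∀ n, (z n : V) ∉ T := by
    intro n
    exact fun h => (z n).2 (Finset.mem_coe.2 h)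
  have hzinj : ∀ {n m : ℕ}, (z n : V) = (z m : V) → n = m := by
    intro n m h
    exact z.injective (Subtype.ext h)
  set E : ℕ → Finset (Sym2 V) := fun n => T.image fun u => s((z n : V), u) with hEdef
  have hedge : ∀ {n n' : ℕ} {u u' : V}, u ∈ T → u' ∈ T →
      s((z n : V), u) = s((z n' : V), u') → n = n' ∧ u = u' := by
    intro n n' u u' hu hu' he
    rw [Sym2.eq_iff] at he
    rcases he with ⟨h1, h2⟩ | ⟨h1, h2⟩
    · exact ⟨hzinj h1, h2⟩
    · exact absurd (h1 ▸ hu') (hzT n)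
  set A : ℕ → Set Ω := fun n => ⋂ e ∈ E n, X e ⁻¹' {colE e} with hAdef
  have hAmeas : ∀ n, MeasurableSet (A n) := by
    intro n
    exact MeasurableSet.biInter (E n).countable_toSet fun e _ =>
      hmeas e (measurableSet_singleton _)
  have hmeasE : ∀ (S : Finset (Sym2 V)), ∀ e ∈ S,
      MeasurableSet[MeasurableSpace.comap (X e) inferInstance] (X e ⁻¹' {colE e}) :=
    fun S e _ => ⟨{colE e}, measurableSet_singleton _, rfl⟩
  have hblock : ∀ n, μ (A n) = ∏ e ∈ E n, μ (X e ⁻¹' {colE e}) := by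
    intro n
    exact hindep.meas_biInter (hmeasE (E n))
  have hAn : ∀ n, μ (A n) = ∏ u ∈ T, ENNReal.ofReal ((1 - p) ^ col u * p) := by
    intro n
    rw [hblock n, Finset.prod_image (fun u hu u' hu' h => (hedge hu hu' h).2)]
    refine Finset.prod_congr rfl fun u hu => ?_
    rw [hcolE _ _ (hzT n) hu]
    exact hdist _ _
  set q : ENNReal := ∏ u ∈ T, ENNReal.ofReal ((1 - p) ^ col u * p) with hqdef
  have hq0 : q ≠ 0 := by
    rw [hqdef, Finset.prod_ne_zero_iff]
    intro u _
    rw [← pos_iff_ne_zero, ENNReal.ofReal_pos]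
    have h1p : 0 < 1 - p := by linarith
    positivity
  have hiind : ProbabilityTheory.iIndepSet A μ := by
    rw [ProbabilityTheory.iIndepSet_iff_meas_biInter hAmeas]
    intro s
    have hdisjE : ∀ n ∈ s, ∀ m ∈ s, n ≠ m → Disjoint (E n) (E m) := by
      intro n _ m _ hnm
      rw [Finset.disjoint_left]
      intro e he he'
      rw [hEdef] at he he'
      simp only [Finset.mem_image] at he he'
      obtain ⟨u, hu, rfl⟩ := he
      obtain ⟨u', hu', h⟩ := he'
      exact hnm (hedge hu hu' h.symm).1
    calc μ (⋂ n ∈ s, A n) = μ (⋂ e ∈ s.biUnion E, X e ⁻¹' {colE e}) := by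
          rw [Finset.set_biInter_biUnion]
      _ = ∏ e ∈ s.biUnion E, μ (X e ⁻¹' {colE e}) := hindep.meas_biInter (hmeasE _)
      _ = ∏ n ∈ s, ∏ e ∈ E n, μ (X e ⁻¹' {colE e}) := Finset.prod_biUnion hdisjE
      _ = ∏ n ∈ s, μ (A n) := Finset.prod_congr rfl fun n _ => (hblock n).symm
  have hsum : ∑' n : ℕ, μ (A n) = ⊤ := by
    have : ∀ n : ℕ, μ (A n) = q := hAn
    rw [tsum_congr this]
    exact ENNReal.tsum_const_eq_top_of_ne_zero hq0
  have hone := ProbabilityTheory.measure_limsup_eq_one hAmeas hiind hsum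
  have hae : ∀ᵐ ω ∂μ, ω ∈ Filter.limsup A Filter.atTop := by
    have hms : MeasurableSet (Filter.limsup A Filter.atTop) := MeasurableSet.measurableSet_limsup hAmeas
    rw [← prob_compl_eq_zero_iff hms] at hone
    rw [ae_iff]
    exact hone
  filter_upwards [hae] with ω hω
  rw [Filter.mem_limsup_iff_frequently_mem] at hω
  obtain ⟨n, hn⟩ := hω.exists
  refine ⟨(z n : V), fun i u hu => ⟨?_, ?_⟩⟩
  · intro h
    exact hzT n (h ▸ hUT i u hu)
  · have hmem : s((z n : V), u) ∈ E n := by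
      rw [hEdef]
      exact Finset.mem_image_of_mem _ (hUT i u hu)
    have := Set.mem_iInter₂.1 hn _ hmem
    rw [Set.mem_preimage, Set.mem_singleton_iff] at this
    rw [this, hcolE _ _ (hzT n) (hUT i u hu), hcol i u hu]

/-- If the edges of a countably infinite complete graph are independently coloured with
colours `c₀, c₁, c₂, …` (indexed by `ℕ`), colour `cᵢ` having probability `(1-p)^i · p`,
then almost surely the resulting coloured graph has the `(∗∞)`-property, and hence is
isomorphic to the (unique) countable `C`-coloured graph with the `(∗∞)`-property, i.e.
the universal homogeneous `C`-coloured graph. -/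
theorem random_colouring_is_universal_homogeneous {V : Type} [Countable V] [Infinite V]
    {Ω : Type*} [MeasurableSpace Ω] (μ : Measure Ω) [IsProbabilityMeasure μ]
    (p : ℝ) (hp0 : 0 < p) (hp1 : p < 1)
    (X : Sym2 V → Ω → ℕ) (hmeas : ∀ e, Measurable (X e))
    (hindep : ProbabilityTheory.iIndepFun X μ)
    (hdist : ∀ (e : Sym2 V) (i : ℕ),
      μ {ω | X e ω = i} = ENNReal.ofReal ((1 - p) ^ i * p)) :
    ∀ᵐ ω ∂μ, StarInfty (fun u v : V => X s(u, v) ω) ∧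
      ∀ (W : Type) [Countable W] (ψ : W → W → ℕ), (∀ a b : W, ψ a b = ψ b a) →
        StarInfty ψ →
        ∃ g : V → W, Function.Bijective g ∧
          ∀ u v : V, u ≠ v → ψ (g u) (g v) = X s(u, v) ω := by
  have partA : ∀ᵐ ω ∂μ, StarInfty (fun u v : V => X s(u, v) ω) := by
    have key : ∀ᵐ ω ∂μ, ∀ t : (Σ k : ℕ, (Fin k → ℕ) × (Fin k → Finset V)),
        (∀ i j, i ≠ j → Disjoint (t.2.2 i) (t.2.2 j)) →
        ∃ z : V, ∀ i, ∀ u ∈ t.2.2 i, z ≠ u ∧ X s(z, u) ω = t.2.1 i := by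
      rw [ae_all_iff]
      intro t
      by_cases hd : ∀ i j, i ≠ j → Disjoint (t.2.2 i) (t.2.2 j)
      · exact (aux_star μ p hp0 hp1 X hmeas hindep hdist t.1 t.2.1 t.2.2 hd).mono
          fun ω h _ => h
      · exact Filter.Eventually.of_forall fun ω h => absurd h hd
    exact key.mono fun ω h k c U hU => h ⟨k, c, U⟩ hU
  filter_upwards [partA] with ω hω
  refine ⟨hω, ?_⟩
  intro W _ ψ hψsym hψ
  have hχsym : ∀ a b : V, X s(a, b) ω = X s(b, a) ω := fun a b => by rw [Sym2.eq_swap]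
  exact back_and_forth hχsym hω hψsym hψ
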